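/- Let M ≥ 1 be a natural number and let Z be a random variable distributed according to the χ²(2M) distribution, i.e., the Gamma distribution with shape parameter M and rate parameter 1/2. Then for every real x > 2M, P(Z > x) ≤ ((x / (2M)) · e^{1 − x/(2M)})^M. -/

import Mathlib

open MeasureTheory ProbabilityTheory

/-- If `Z` is a `χ²(2M)` random variable (Gamma distribution with shape `M` and rate `1/2`),
with `M ≥ 1`, then for every real `x > 2M`,
`P(Z > x) ≤ ((x / (2M)) · e^{1 - x/(2M)})^M`. -/
theorem stmt_5 (M : ℕ) (hM : 1 ≤ M)
    {Ω : Type*} [MeasurableSpace Ω] (μ : Measure Ω) [IsProbabilityMeasure μ]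
    (Z : Ω → ℝ)
    (hdist : Measure.map Z μ = gammaMeasure M (1 / 2))
    (x : ℝ) (hx : 2 * M < x) :
    μ {ω | x < Z ω} ≤
      ENNReal.ofReal ((x / (2 * M) * Real.exp (1 - x / (2 * M))) ^ M) := by
  set a : ℝ := (M : ℝ) with ha_def
  have haM : (1 : ℝ) ≤ a := Nat.one_le_cast.mpr hM
  have ha : 0 < a := lt_of_lt_of_le one_pos haM
  have hx0 : 0 < x := lt_trans (by positivity) hx
  set r : ℝ := 1 / 2 with hr_def
  have hr : 0 < r := by norm_num [hr_def]
  set s : ℝ := a / x with hs_def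
  have hs : 0 < s := div_pos ha hx0
  set t : ℝ := r - s with ht_def
  have hst : s < r := by
    rw [hs_def, hr_def, div_lt_div_iff₀ hx0 (by norm_num)]
    linarith
  have ht : 0 < t := sub_pos.mpr hst
  set C : ℝ := (r / s) ^ a * Real.exp (-(t * x)) with hC_def
  have hC0 : 0 ≤ C := by positivity
  -- pointwise bound
  have hpoint : ∀ z ∈ Set.Ioi x, gammaPDF a r z ≤ ENNReal.ofReal C * gammaPDF a s z := by
    intro z hz
    have hxz : x ≤ z := le_of_lt hz
    have hz0 : (0 : ℝ) ≤ z := le_trans hx0.le hxz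
    rw [gammaPDF_of_nonneg hz0, gammaPDF_of_nonneg hz0, ← ENNReal.ofReal_mul hC0]
    refine ENNReal.ofReal_le_ofReal ?_
    have key : r ^ a / Real.Gamma a * z ^ (a - 1) * Real.exp (-(r * z)) =
        (r / s) ^ a * Real.exp (-(t * z)) *
          (s ^ a / Real.Gamma a * z ^ (a - 1) * Real.exp (-(s * z))) := by
      have h1 : (r / s) ^ a * s ^ a = r ^ a := by
        rw [← Real.mul_rpow (by positivity) hs.le, div_mul_cancel₀ _ hs.ne']
      have h2 : Real.exp (-(r * z)) = Real.exp (-(t * z)) * Real.exp (-(s * z)) := by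
        rw [← Real.exp_add, ht_def]; ring_nf
      rw [h2, ← h1]; ring
    rw [key, hC_def]
    have hexp : Real.exp (-(t * z)) ≤ Real.exp (-(t * x)) := by
      apply Real.exp_le_exp.mpr
      have := mul_le_mul_of_nonneg_left hxz ht.le
      linarith
    have hg : 0 ≤ s ^ a / Real.Gamma a * z ^ (a - 1) * Real.exp (-(s * z)) := by
      have := Real.Gamma_pos_of_pos ha
      positivity
    exact mul_le_mul_of_nonneg_right
      (mul_le_mul_of_nonneg_left hexp (by positivity)) hg
  -- identify the measure of the event
  have hZ : AEMeasurable Z μ := by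
    by_contra h
    rw [Measure.map_of_not_aemeasurable h] at hdist
    have hprob : IsProbabilityMeasure (gammaMeasure a r) :=
      isProbabilityMeasure_gammaMeasure ha hr
    have := hprob.measure_univ
    rw [← hdist] at this
    simp at this
  have hmap : μ {ω | x < Z ω} = gammaMeasure a r (Set.Ioi x) := by
    rw [← hdist, Measure.map_apply_of_aemeasurable hZ measurableSet_Ioi]
    rfl
  rw [hmap, gammaMeasure, withDensity_apply _ measurableSet_Ioi]
  have hmeas : Measurable fun z => ENNReal.ofReal C * gammaPDF a s z := by
    exact ((measurable_gammaPDFReal a s).ennreal_ofReal).const_mul _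
  calc ∫⁻ z in Set.Ioi x, gammaPDF a r z
      ≤ ∫⁻ z in Set.Ioi x, ENNReal.ofReal C * gammaPDF a s z :=
        setLIntegral_mono hmeas hpoint
    _ = ENNReal.ofReal C * ∫⁻ z in Set.Ioi x, gammaPDF a s z := by
        exact lintegral_const_mul' _ _ ENNReal.ofReal_ne_top
    _ ≤ ENNReal.ofReal C * 1 := by
        gcongr
        rw [← lintegral_gammaPDF_eq_one ha hs]
        exact setLIntegral_le_lintegral _ _
    _ = ENNReal.ofReal C := mul_one _
    _ = ENNReal.ofReal ((x / (2 * M) * Real.exp (1 - x / (2 * M))) ^ M) := by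
        congr 1
        have hrs : r / s = x / (2 * a) := by
          rw [hr_def, hs_def]
          field_simp
        have h1 : (r / s) ^ a = (x / (2 * a)) ^ M := by
          rw [hrs, ha_def, Real.rpow_natCast]
        have h2 : Real.exp (-(t * x)) = Real.exp (1 - x / (2 * a)) ^ M := by
          rw [← Real.exp_nat_mul]
          congr 1
          rw [ht_def, hr_def, hs_def]
          field_simp
          ring
        rw [hC_def, h1, h2, ← mul_pow]
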